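/- On the reference triangle, the space S_m = {p ∈ (P_m)² : x₁ p₁ + x₂ p₂ = 0 identically} is exactly the set of vector fields of the form q(x₁,x₂)·(−x₂, x₁) with q a homogeneous-degree-decomposable polynomial of degree at most m−1; in particular, every p ∈ S_m can be written p = q·(−x₂, x₁) for a unique polynomial q of total degree ≤ m−1, and dim S_m = m(m+1)/2. -/

import Mathlib

open MvPolynomial

/-- The space `S_m` of vector polynomials of total degree at most `m` whose scalar product
with the position vector vanishes identically. -/
noncomputable def Sm (m : ℕ) : Submodule ℝ (Fin 2 → MvPolynomial (Fin 2) ℝ) where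
  carrier := {p | (∀ i, (p i).totalDegree ≤ m) ∧ X 0 * p 0 + X 1 * p 1 = 0}
  add_mem' := by
    rintro a b ⟨hda, ha⟩ ⟨hdb, hb⟩
    refine ⟨fun i => le_trans (totalDegree_add _ _) (max_le (hda i) (hdb i)), ?_⟩
    have : X 0 * (a + b) 0 + X 1 * (a + b) 1 =
        (X 0 * a 0 + X 1 * a 1) + (X 0 * b 0 + X 1 * b 1) := by
      simp [Pi.add_apply]; ring
    rw [this, ha, hb, add_zero]
  zero_mem' := ⟨fun i => by simp, by simp⟩
  smul_mem' := by
    rintro c p ⟨hd, hp⟩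
    refine ⟨fun i => le_trans (totalDegree_smul_le c (p i)) (hd i), ?_⟩
    have : X 0 * (c • p) 0 + X 1 * (c • p) 1 = c • (X 0 * p 0 + X 1 * p 1) := by
      simp [Pi.smul_apply, smul_add, mul_smul_comm]
    rw [this, hp, smul_zero]

lemma Sm.sum_fin2 (d : Fin 2 →₀ ℕ) : (d.sum fun _ e => e) = d 0 + d 1 := by
  rw [Finsupp.sum_fintype _ _ (fun _ => rfl), Fin.sum_univ_two]

lemma Sm.mem_iff (m : ℕ) (p : Fin 2 → MvPolynomial (Fin 2) ℝ) :
    p ∈ Sm m ↔ (∀ i, (p i).totalDegree ≤ m) ∧ X 0 * p 0 + X 1 * p 1 = 0 := Iff.rfl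

/-- The key divisibility lemma. -/
lemma Sm.key_div {m : ℕ} (p0 p1 : MvPolynomial (Fin 2) ℝ)
    (h : X 0 * p0 + X 1 * p1 = 0) (hd1 : p1.totalDegree ≤ m) :
    ∃ q : MvPolynomial (Fin 2) ℝ,
      q.totalDegree ≤ m - 1 ∧ p0 = -(X 1) * q ∧ p1 = X 0 * q := by
  classical
  have hcoeff : ∀ d : Fin 2 →₀ ℕ, d 0 = 0 → coeff d p1 = 0 := by
    intro d hd
    have h' := congrArg (coeff (Finsupp.single 1 1 + d)) h
    rw [coeff_add, coeff_X_mul, coeff_zero, coeff_X_mul' _ 0] at h'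
    have h0 : (0 : Fin 2) ∉ (Finsupp.single (1 : Fin 2) 1 + d).support := by
      simp [Finsupp.mem_support_iff, Finsupp.add_apply, Finsupp.single_apply, hd]
    rw [if_neg h0, zero_add] at h'
    exact h'
  have hdvd : (X 0 : MvPolynomial (Fin 2) ℝ) ∣ p1 := by
    rw [X_dvd_iff_modMonomial_eq_zero]
    ext d
    by_cases hle : Finsupp.single (0 : Fin 2) 1 ≤ d
    · rw [coeff_modMonomial_of_le _ hle, coeff_zero]
    · rw [coeff_modMonomial_of_not_le _ hle, coeff_zero]
      apply hcoeff
      rw [Finsupp.single_le_iff] at hle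
      omega
  obtain ⟨q, hq⟩ := hdvd
  have hX0 : (X 0 : MvPolynomial (Fin 2) ℝ) ≠ 0 := X_ne_zero 0
  have hp0 : p0 = -(X 1) * q := by
    have : X 0 * (p0 + X 1 * q) = 0 := by rw [mul_add]; rw [hq] at h; linear_combination h
    rcases mul_eq_zero.mp this with h' | h'
    · exact absurd h' hX0
    · linear_combination h'
  refine ⟨q, ?_, hp0, hq⟩
  by_cases hq0 : q = 0
  · simp [hq0]
  rw [totalDegree]
  apply Finset.sup_le
  intro d hd
  have hmem : Finsupp.single (0 : Fin 2) 1 + d ∈ (X 0 * q : MvPolynomial (Fin 2) ℝ).support := by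
    rw [support_X_mul]
    exact Finset.mem_map_of_mem _ hd
  have h1 := le_totalDegree hmem
  rw [← hq] at h1
  have h2 := h1.trans hd1
  rw [Sm.sum_fin2] at h2
  simp only [Finsupp.add_apply, Finsupp.single_apply] at h2
  rw [Sm.sum_fin2]
  simp at h2
  omega

/-- Membership of `(-(X 1) q, X 0 q)` in `Sm m`. -/
lemma Sm.mem_of_eq {m : ℕ} (hm : 1 ≤ m) (p : Fin 2 → MvPolynomial (Fin 2) ℝ)
    (q : MvPolynomial (Fin 2) ℝ) (hq : q.totalDegree ≤ m - 1)
    (h0 : p 0 = -(X 1) * q) (h1 : p 1 = X 0 * q) : p ∈ Sm m := by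
  rw [Sm.mem_iff]
  constructor
  · intro i
    fin_cases i
    · show (p 0).totalDegree ≤ m
      rw [h0, neg_mul]
      rw [totalDegree_neg]
      refine le_trans (totalDegree_mul _ _) ?_
      rw [totalDegree_X]
      omega
    · show (p 1).totalDegree ≤ m
      rw [h1]
      refine le_trans (totalDegree_mul _ _) ?_
      rw [totalDegree_X]
      omega
  · rw [h0, h1]; ring

noncomputable def Sm.Tmap : MvPolynomial (Fin 2) ℝ →ₗ[ℝ] (Fin 2 → MvPolynomial (Fin 2) ℝ) where
  toFun q := ![-(X 1) * q, X 0 * q]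
  map_add' a b := by
    funext i
    fin_cases i <;> simp <;> ring
  map_smul' c a := by
    funext i
    fin_cases i <;> simp [Matrix.smul_cons]

@[simp] lemma Sm.Tmap_zero (q) : Sm.Tmap q 0 = -(X 1) * q := rfl
@[simp] lemma Sm.Tmap_one (q) : Sm.Tmap q 1 = X 0 * q := rfl

lemma Sm.card_aux (n : ℕ) :
    Nat.card {d : Fin 2 →₀ ℕ // (d.sum fun _ e => e) ≤ n} = (n + 1) * (n + 2) / 2 := by
  classical
  set F : Finset (ℕ × ℕ) :=
    ((Finset.range (n+1)).sigma (fun a => Finset.range (n+1-a))).map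
      (Equiv.sigmaEquivProd ℕ ℕ).toEmbedding with hF
  have hmemF : ∀ x : ℕ × ℕ, x ∈ F ↔ x.1 + x.2 ≤ n := by
    rintro ⟨a, b⟩
    simp only [hF, Finset.mem_map, Finset.mem_sigma, Finset.mem_range,
      Equiv.toEmbedding_apply, Equiv.sigmaEquivProd_apply]
    constructor
    · rintro ⟨⟨c, d⟩, ⟨hc, hd⟩, h⟩
      simp only [Prod.mk.injEq] at h
      obtain ⟨rfl, rfl⟩ := h
      dsimp only at hc hd
      omega
    · intro h
      refine ⟨⟨a, b⟩, ?_, rfl⟩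
      refine ⟨?_, ?_⟩ <;> dsimp only <;> omega
  have hcard : F.card = (n + 1) * (n + 2) / 2 := by
    rw [hF, Finset.card_map, Finset.card_sigma]
    simp only [Finset.card_range]
    have h1 : ∑ a ∈ Finset.range (n+1), (n + 1 - a) = ∑ a ∈ Finset.range (n+1), (a + 1) := by
      rw [← Finset.sum_range_reflect]
      apply Finset.sum_congr rfl
      intro a ha
      simp only [Finset.mem_range] at ha
      omega
    have h2 : (∑ a ∈ Finset.range (n+2), a) * 2 = (n+1) * (n+2) := by
      rw [Finset.sum_range_id_mul_two]
      have : n + 2 - 1 = n + 1 := rfl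
      rw [this]; ring
    have h3 : ∑ a ∈ Finset.range (n+1), (a + 1) = ∑ a ∈ Finset.range (n+2), a := by
      rw [Finset.sum_range_succ' (fun a => a) (n+1)]
      simp
    rw [h1, h3]
    omega
  have e : {d : Fin 2 →₀ ℕ // (d.sum fun _ e => e) ≤ n} ≃ {x : ℕ × ℕ // x ∈ F} := by
    refine ⟨fun d => ⟨(d.1 0, d.1 1), ?_⟩,
      fun x => ⟨Finsupp.single 0 x.1.1 + Finsupp.single 1 x.1.2, ?_⟩, ?_, ?_⟩
    · rw [hmemF]
      have := d.2
      rw [Sm.sum_fin2] at this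
      exact this
    · rw [Sm.sum_fin2]
      simp only [Finsupp.add_apply, Finsupp.single_apply]
      have := (hmemF x.1).mp x.2
      simp
      omega
    · rintro ⟨d, hd⟩
      apply Subtype.ext
      ext i
      fin_cases i <;> simp [Finsupp.single_apply]
    · rintro ⟨⟨a, b⟩, hx⟩
      apply Subtype.ext
      simp [Finsupp.single_apply]
  rw [Nat.card_congr e, Nat.card_eq_finsetCard]
  exact hcard

lemma Sm.finrank_rtd (n : ℕ) :
    Module.finrank ℝ (restrictTotalDegree (Fin 2) ℝ n) = (n + 1) * (n + 2) / 2 := by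
  have b : Module.Basis {d : Fin 2 →₀ ℕ // (d.sum fun _ e => e) ≤ n} ℝ
      (restrictTotalDegree (Fin 2) ℝ n) :=
    basisRestrictSupport ℝ {d : Fin 2 →₀ ℕ | (d.sum fun _ e => e) ≤ n}
  rw [Module.finrank_eq_nat_card_basis b, Sm.card_aux]

/-- `S_m` consists exactly of the multiples `q ⬝ (-x₂, x₁)` with `deg q ≤ m - 1`, the
representation is unique, and `dim S_m = m (m + 1) / 2`. -/
theorem Sm_characterization (m : ℕ) (hm : 1 ≤ m) :
    (∀ p : Fin 2 → MvPolynomial (Fin 2) ℝ,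
        p ∈ Sm m ↔ ∃ q : MvPolynomial (Fin 2) ℝ,
          q.totalDegree ≤ m - 1 ∧ p 0 = -(X 1) * q ∧ p 1 = X 0 * q) ∧
    (∀ p ∈ Sm m, ∃! q : MvPolynomial (Fin 2) ℝ,
        q.totalDegree ≤ m - 1 ∧ p 0 = -(X 1) * q ∧ p 1 = X 0 * q) ∧
    Module.finrank ℝ (Sm m) = m * (m + 1) / 2 := by
  have hX0 : (X 0 : MvPolynomial (Fin 2) ℝ) ≠ 0 := X_ne_zero 0
  have hiff : ∀ p : Fin 2 → MvPolynomial (Fin 2) ℝ,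
      p ∈ Sm m ↔ ∃ q : MvPolynomial (Fin 2) ℝ,
        q.totalDegree ≤ m - 1 ∧ p 0 = -(X 1) * q ∧ p 1 = X 0 * q := by
    intro p
    constructor
    · rintro ⟨hd, hp⟩
      exact Sm.key_div (p 0) (p 1) hp (hd 1)
    · rintro ⟨q, hq, h0, h1⟩
      exact Sm.mem_of_eq hm p q hq h0 h1
  refine ⟨hiff, ?_, ?_⟩
  · intro p hp
    obtain ⟨q, hq, h0, h1⟩ := (hiff p).mp hp
    refine ⟨q, ⟨hq, h0, h1⟩, ?_⟩
    rintro q' ⟨hq', h0', h1'⟩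
    have : X 0 * q' = X 0 * q := by rw [← h1, ← h1']
    exact mul_left_cancel₀ hX0 this
  · -- dimension
    let L₀ := Sm.Tmap.comp (restrictTotalDegree (Fin 2) ℝ (m-1)).subtype
    have hmem : ∀ q : restrictTotalDegree (Fin 2) ℝ (m-1), L₀ q ∈ Sm m := by
      intro q
      have hq : (q : MvPolynomial (Fin 2) ℝ).totalDegree ≤ m - 1 :=
        (mem_restrictTotalDegree _ _ _).mp q.2
      exact Sm.mem_of_eq hm _ _ hq rfl rfl
    let L := L₀.codRestrict (Sm m) hmem
    have hbij : Function.Bijective L := by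
      constructor
      · intro a b hab
        have h1 : L₀ a = L₀ b := congrArg Subtype.val hab
        have h2 : X 0 * (a : MvPolynomial (Fin 2) ℝ) = X 0 * (b : MvPolynomial (Fin 2) ℝ) :=
          congrFun h1 1
        exact Subtype.ext (mul_left_cancel₀ hX0 h2)
      · rintro ⟨p, hp⟩
        obtain ⟨q, hq, h0, h1⟩ := (hiff p).mp hp
        refine ⟨⟨q, (mem_restrictTotalDegree _ _ _).mpr hq⟩, ?_⟩
        apply Subtype.ext
        funext i
        fin_cases i
        · exact h0.symm
        · exact h1.symm
    have := (LinearEquiv.ofBijective L hbij).finrank_eq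
    rw [← this, Sm.finrank_rtd]
    have h1 : m - 1 + 1 = m := by omega
    have h2 : m - 1 + 2 = m + 1 := by omega
    rw [h1, h2]
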